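/- For every even n ≥ 2, there exists a monotone Boolean network f : {0,1}^n → {0,1}^n, a configuration x, and a fixed point y of f, such that y is reachable from x in the asynchronous graph Γ(f) and the distance d_{Γ(f)}(x,y) is at least 2^{n/2}. -/

import Mathlib

/-- One asynchronous update step of the Boolean network `f`. -/
def Step {I : Type*} [DecidableEq I] (f : (I → Bool) → I → Bool) (x y : I → Bool) : Prop :=
  ∃ i, f x i ≠ x i ∧ y = Function.update x i (f x i)

/-- `Γ(f)` has a path from `x` to `y` of length `l`. -/
def PathLen {I : Type*} [DecidableEq I] (f : (I → Bool) → I → Bool)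
    (x y : I → Bool) (l : ℕ) : Prop :=
  ∃ p : ℕ → I → Bool, p 0 = x ∧ p l = y ∧ ∀ k < l, Step f (p k) (p (k + 1))

/-- Positive arc from `j` to `i` in the interaction graph `G(f)`. -/
def PosArc {n : ℕ} (f : (Fin n → Bool) → Fin n → Bool) (j i : Fin n) : Prop :=
  ∃ x, f (Function.update x j true) i = true ∧ f (Function.update x j false) i = false

/-- Negative arc from `j` to `i` in the interaction graph `G(f)`. -/
def NegArc {n : ℕ} (f : (Fin n → Bool) → Fin n → Bool) (j i : Fin n) : Prop :=
  ∃ x, f (Function.update x j true) i = false ∧ f (Function.update x j false) i = true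

/-- Arc in the underlying unsigned digraph of `G(f)`. -/
def Arc {n : ℕ} (f : (Fin n → Bool) → Fin n → Bool) (j i : Fin n) : Prop :=
  PosArc f j i ∨ NegArc f j i

/-- The interaction graph `G(f)` is acyclic (no directed cycle, including loops). -/
def AcyclicIG {n : ℕ} (f : (Fin n → Bool) → Fin n → Bool) : Prop :=
  ∀ i, ¬ Relation.TransGen (Arc f) i i

/-- Hamming distance. -/
def ham {n : ℕ} (x y : Fin n → Bool) : ℕ :=
  (Finset.univ.filter fun i => x i ≠ y i).card

/-- Componentwise negation. -/
def negc {n : ℕ} (x : Fin n → Bool) : Fin n → Bool := fun i => !(x i)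

/-- Number of ones (weight). -/
def wt {n : ℕ} (x : Fin n → Bool) : ℕ :=
  (Finset.univ.filter fun i => x i = true).card

/-- `x` with coordinate `i` flipped. -/
def flipAt {n : ℕ} (x : Fin n → Bool) (i : Fin n) : Fin n → Bool :=
  Function.update x i (!(x i))

/-- `G(f)` has no negative loops. -/
def NoNegLoop {n : ℕ} (f : (Fin n → Bool) → Fin n → Bool) : Prop :=
  ∀ i, ¬ NegArc f i i

/-- First-half components of the embedding construction `f'`. -/
def F1 {n : ℕ} (f : (Fin n → Bool) → Fin n → Bool) (x y : Fin n → Bool) (i : Fin n) : Bool :=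
  if y = negc x ∨ flipAt y i = negc x then f x i
  else if wt x + wt y = n then !(x i)
  else if wt x + wt y = n + 1 then true
  else if wt x + wt y + 1 = n then false
  else if n + 2 ≤ wt x + wt y then true
  else false

/-- The embedding construction `f' : {0,1}^{2n} → {0,1}^{2n}`, with the `2n`
coordinates indexed by `Fin n ⊕ Fin n`. -/
def Fext {n : ℕ} (f : (Fin n → Bool) → Fin n → Bool) (z : (Fin n ⊕ Fin n) → Bool) :
    (Fin n ⊕ Fin n) → Bool :=
  Sum.elim (fun i => F1 f (z ∘ Sum.inl) (z ∘ Sum.inr) i)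
           (fun i => !(F1 f (negc (z ∘ Sum.inr)) (negc (z ∘ Sum.inl)) i))

/-- Concatenation `(x, y) ∈ {0,1}^{2n}`. -/
def pair {n : ℕ} (x y : Fin n → Bool) : (Fin n ⊕ Fin n) → Bool := Sum.elim x y


def gray (k : ℕ) : ℕ := k ^^^ (k / 2)

def grec : ℕ → ℕ
  | 0 => 0
  | (x+1) => (x+1) ^^^ grec ((x+1)/2)
decreasing_by exact Nat.div_lt_self (Nat.succ_pos _) one_lt_two

def trl : ℕ → ℕ
  | 0 => 0
  | (k+1) => if (k+1) % 2 = 0 then 0 else trl ((k+1)/2) + 1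
decreasing_by exact Nat.div_lt_self (Nat.succ_pos _) one_lt_two

lemma xor_div_two (x y : ℕ) : (x ^^^ y) / 2 = x / 2 ^^^ y / 2 := by
  apply Nat.eq_of_testBit_eq
  intro i
  simp [Nat.testBit_div_two, Nat.testBit_xor]

lemma gray_div_two (a : ℕ) : gray a / 2 = gray (a / 2) := by
  simp [gray, xor_div_two]

lemma gray_eq_zero {a : ℕ} (h : gray a = 0) : a = 0 := by
  have := xor_eq_zero_iff.mp h
  omega

lemma grec_gray (a : ℕ) : grec (gray a) = a := by
  induction a using Nat.strong_induction_on with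
  | _ a ih =>
    rcases Nat.eq_zero_or_pos a with rfl | ha
    · simp [gray, grec]
    · have hg : gray a ≠ 0 := fun h => absurd (gray_eq_zero h) (by omega)
      obtain ⟨c, hc⟩ := Nat.exists_eq_succ_of_ne_zero hg
      simp only [Nat.succ_eq_add_one] at hc
      rw [hc]
      rw [grec]
      rw [← hc, gray_div_two, ih (a/2) (Nat.div_lt_self ha one_lt_two)]
      exact xor_cancel_right _ _

lemma gray_inj {a b : ℕ} (h : gray a = gray b) : a = b := by
  rw [← grec_gray a, h, grec_gray]


lemma trl_even {k : ℕ} (h : k % 2 = 0) : trl k = 0 := by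
  cases k with
  | zero => simp [trl]
  | succ k => rw [trl, if_pos h]

lemma trl_odd {k : ℕ} (h : k % 2 = 1) : trl k = trl (k/2) + 1 := by
  cases k with
  | zero => simp at h
  | succ k => rw [trl, if_neg (by omega)]

lemma xor_l1 (j : ℕ) : (2*j) ^^^ (2*j+1) = 1 := by
  apply Nat.eq_of_testBit_eq
  intro i
  cases i with
  | zero =>
      have h1 : (2*j) % 2 = 0 := by omega
      have h2 : (2*j+1) % 2 = 1 := by omega
      rw [Nat.testBit_xor]
      simp [Nat.testBit_zero, h1, h2]
  | succ i =>
      rw [Nat.testBit_xor, Nat.testBit_succ, Nat.testBit_succ, Nat.testBit_succ]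
      have h1 : 2*j/2 = j := by omega
      have h2 : (2*j+1)/2 = j := by omega
      have h3 : (1:ℕ)/2 = 0 := rfl
      rw [h1, h2, h3]
      simp

lemma xor_l2 (j : ℕ) : (2*j+1) ^^^ (2*j+2) = 2*(j ^^^ (j+1)) + 1 := by
  apply Nat.eq_of_testBit_eq
  intro i
  cases i with
  | zero =>
      have h1 : (2*j+1) % 2 = 1 := by omega
      have h2 : (2*j+2) % 2 = 0 := by omega
      have h3 : (2*(j ^^^ (j+1)) + 1) % 2 = 1 := by omega
      rw [Nat.testBit_xor]
      simp [Nat.testBit_zero, h1, h2, h3]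
  | succ i =>
      rw [Nat.testBit_xor, Nat.testBit_succ, Nat.testBit_succ, Nat.testBit_succ]
      have h1 : (2*j+1)/2 = j := by omega
      have h2 : (2*j+2)/2 = j+1 := by omega
      have h3 : (2*(j ^^^ (j+1)) + 1)/2 = j ^^^ (j+1) := by omega
      rw [h1, h2, h3, Nat.testBit_xor]

lemma xor_succ (k : ℕ) : k ^^^ (k+1) = 2^(trl k + 1) - 1 := by
  induction k using Nat.strong_induction_on with
  | _ k ih =>
    rcases Nat.even_or_odd k with ⟨j, hj⟩ | ⟨j, hj⟩
    · have hk : k = 2*j := by omega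
      rw [hk, xor_l1, trl_even (by omega)]
      norm_num
    · have hk : k = 2*j+1 := by omega
      have hlt : j < k := by omega
      have ihj := ih j hlt
      have htr : trl k = trl j + 1 := by
        rw [trl_odd (by omega)]
        congr 1
        congr 1
        omega
      have h2 : k + 1 = 2*j+2 := by omega
      rw [hk] at htr ⊢
      rw [(by omega : 2*j+1+1 = 2*j+2), xor_l2, ihj, htr]
      have hp : (2:ℕ)^(trl j + 1 + 1) = 2 * 2^(trl j + 1) := by ring
      have hp1 : (2:ℕ)^(trl j + 1) ≥ 1 := Nat.one_le_two_pow
      omega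

lemma gray_xor_succ (k : ℕ) : gray k ^^^ gray (k+1) = 2^(trl k) := by
  have e1 : gray k ^^^ gray (k+1) = (k ^^^ (k+1)) ^^^ ((k ^^^ (k+1)) / 2) := by
    rw [xor_div_two]
    unfold gray
    rw [Nat.xor_assoc, Nat.xor_assoc]
    congr 1
    rw [← Nat.xor_assoc, ← Nat.xor_assoc]
    rw [Nat.xor_comm (k/2) (k+1)]
  rw [e1, xor_succ k]
  have h2 : (2^(trl k + 1) - 1) / 2 = 2^(trl k) - 1 := by
    have : (2:ℕ)^(trl k + 1) = 2 * 2^(trl k) := by ring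
    omega
  rw [h2]
  apply Nat.eq_of_testBit_eq
  intro i
  rw [Nat.testBit_xor, Nat.testBit_two_pow_sub_one, Nat.testBit_two_pow_sub_one,
    Nat.testBit_two_pow]
  rcases Nat.lt_trichotomy i (trl k) with h | h | h
  · have h1 : i < trl k + 1 := by omega
    have h2 : trl k ≠ i := by omega
    simp [h, h1, h2]
  · have h1 : i < trl k + 1 := by omega
    have h2 : ¬ i < trl k := by omega
    simp [h, h1, h2]
  · have h1 : ¬ i < trl k + 1 := by omega
    have h2 : ¬ i < trl k := by omega
    have h3 : trl k ≠ i := by omega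
    simp [h1, h2, h3]

lemma gray_succ (k : ℕ) : gray (k+1) = gray k ^^^ 2^(trl k) := by
  rw [← gray_xor_succ k, xor_cancel_left]

lemma trl_succ_ne (k : ℕ) : trl (k+1) ≠ trl k := by
  rcases Nat.even_or_odd k with ⟨j, hj⟩ | ⟨j, hj⟩
  · rw [trl_odd (k := k+1) (by omega), trl_even (k := k) (by omega)]
    exact Nat.succ_ne_zero _
  · rw [trl_even (k := k+1) (by omega), trl_odd (k := k) (by omega)]
    exact (Nat.succ_ne_zero _).symm

lemma gray_lt {m k : ℕ} (h : k < 2^m) : gray k < 2^m :=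
  Nat.xor_lt_two_pow h (lt_of_le_of_lt (Nat.div_le_self k 2) h)

lemma trl_lt {m k : ℕ} (h : k + 1 < 2^m) : trl k < m := by
  have h1 : gray k ^^^ gray (k+1) < 2^m :=
    Nat.xor_lt_two_pow (gray_lt (by omega)) (gray_lt h)
  rw [gray_xor_succ] at h1
  exact (Nat.pow_lt_pow_iff_right one_lt_two).mp h1

def wt' {n : ℕ} (x : Fin n → Bool) : ℕ :=
  (Finset.univ.filter fun i => x i = true).card

def cl (m : ℕ) {n : ℕ} (k : ℕ) : Fin n → Bool := fun i =>
  if i.val < m then (gray k).testBit i.val else !((gray k).testBit (i.val - m))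

def dle (m : ℕ) {n : ℕ} (k : ℕ) (z : Fin n → Bool) : Prop :=
  ∀ j, cl m k j = true → z j = true

instance {m n k : ℕ} {z : Fin n → Bool} : Decidable (dle m k z) := by
  unfold dle; infer_instance

def FF (m : ℕ) {n : ℕ} (z : Fin n → Bool) (i : Fin n) : Bool :=
  decide (∃ k, k < 2^m ∧ dle m k z ∧ cl m (min (k+1) (2^m - 1)) i = true)

lemma dle_refl (m : ℕ) {n : ℕ} (k : ℕ) : dle m k (cl m (n := n) k) := fun _ h => h

lemma cl_le_inj (m n : ℕ) (hn : n = m + m) {k k' : ℕ} (hk : k < 2^m) (hk' : k' < 2^m)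
    (h : dle m k (cl m (n := n) k')) : k = k' := by
  apply gray_inj (a := k) (b := k')
  apply Nat.eq_of_testBit_eq
  intro t
  by_cases ht : t < m
  · have hL := h ⟨t, by omega⟩
    have hR := h ⟨t + m, by omega⟩
    simp only [cl] at hL hR
    rw [if_pos (show ((⟨t, by omega⟩ : Fin n)).val < m from ht),
        if_pos (show ((⟨t, by omega⟩ : Fin n)).val < m from ht)] at hL
    rw [if_neg (show ¬ ((⟨t + m, by omega⟩ : Fin n)).val < m by simp),
        if_neg (show ¬ ((⟨t + m, by omega⟩ : Fin n)).val < m by simp)] at hR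
    simp only [show ((⟨t + m, by omega⟩ : Fin n)).val - m = t by simp] at hR
    cases hbt : (gray k).testBit t
    · rw [hbt] at hR
      simp at hR
      cases hbt' : (gray k').testBit t
      · rfl
      · rw [hbt'] at hR; simp at hR
    · rw [hbt] at hL
      exact (hL rfl).symm
  · rw [Nat.testBit_lt_two_pow, Nat.testBit_lt_two_pow]
    · exact lt_of_lt_of_le (gray_lt hk') (Nat.pow_le_pow_right (by norm_num) (by omega))
    · exact lt_of_lt_of_le (gray_lt hk) (Nat.pow_le_pow_right (by norm_num) (by omega))

lemma FF_cl (m n : ℕ) (hn : n = m + m) {k : ℕ} (hk : k < 2^m) :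
    FF m (cl m (n := n) k) = cl m (min (k+1) (2^m - 1)) := by
  funext i
  have hiff : (∃ k', k' < 2^m ∧ dle m k' (cl m (n := n) k) ∧
      cl m (min (k'+1) (2^m - 1)) i = true) ↔ cl m (n := n) (min (k+1) (2^m - 1)) i = true := by
    constructor
    · rintro ⟨k', h1, h2, h3⟩
      rwa [cl_le_inj m n hn h1 hk h2] at h3
    · intro h
      exact ⟨k, hk, dle_refl m k, h⟩
  unfold FF
  cases hc : cl m (n := n) (min (k+1) (2^m - 1)) i with
  | false =>
      apply decide_eq_false
      intro hx
      rw [hiff.mp hx] at hc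
      exact Bool.noConfusion hc
  | true => exact decide_eq_true (hiff.mpr hc)

lemma FF_mono (m : ℕ) {n : ℕ} : Monotone (FF m (n := n)) := by
  intro z z' hz
  refine Pi.le_def.mpr fun i => Bool.le_iff_imp.mpr fun h => ?_
  unfold FF at h ⊢
  obtain ⟨k, h1, h2, h3⟩ := of_decide_eq_true h
  exact decide_eq_true ⟨k, h1, fun j hj => Bool.le_iff_imp.mp (hz j) (h2 j hj), h3⟩

lemma wt_update_true {n : ℕ} (z : Fin n → Bool) (i : Fin n) (h : z i = false) :
    wt' (Function.update z i true) = wt' z + 1 := by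
  unfold wt'
  have he : (Finset.univ.filter fun j => Function.update z i true j = true)
      = insert i (Finset.univ.filter fun j => z j = true) := by
    ext j
    by_cases hj : j = i
    · subst hj
      simp
    · simp [Function.update_of_ne hj, hj]
  rw [he, Finset.card_insert_of_notMem (by simp [h])]

lemma wt_update_false {n : ℕ} (z : Fin n → Bool) (i : Fin n) (h : z i = true) :
    wt' z = wt' (Function.update z i false) + 1 := by
  unfold wt'
  have he : (Finset.univ.filter fun j => z j = true)
      = insert i (Finset.univ.filter fun j => Function.update z i false j = true) := by
    ext j
    by_cases hj : j = i
    · subst hj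
      simp [h]
    · simp [Function.update_of_ne hj, hj]
  rw [he, Finset.card_insert_of_notMem (by simp)]

def sig (m : ℕ) {n : ℕ} (hn : n = m + m) (i : Fin n) : Fin n :=
  if h : (i : ℕ) < m then ⟨(i : ℕ) + m, by omega⟩ else ⟨(i : ℕ) - m, by omega⟩

lemma sig_cl (m : ℕ) {n : ℕ} (hn : n = m + m) (k : ℕ) (i : Fin n) :
    cl m k (sig m hn i) = !(cl m k i) := by
  unfold sig
  by_cases h : (i : ℕ) < m
  · rw [dif_pos h]
    simp only [cl]
    rw [if_neg (by simp), if_pos h]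
    simp
  · rw [dif_neg h]
    have hi : (i : ℕ) < n := i.isLt
    simp only [cl]
    rw [if_pos (by omega), if_neg h]
    simp

lemma sig_sig (m : ℕ) {n : ℕ} (hn : n = m + m) (i : Fin n) :
    sig m hn (sig m hn i) = i := by
  unfold sig
  have hi : (i : ℕ) < n := i.isLt
  by_cases h : (i : ℕ) < m
  · rw [dif_pos h, dif_neg (by simp)]
    apply Fin.ext
    simp
  · rw [dif_neg h, dif_pos (by simp; omega)]
    apply Fin.ext
    simp
    omega

lemma wt_cl (m n : ℕ) (hn : n = m + m) (k : ℕ) : wt' (cl m (n := n) k) = m := by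
  classical
  have hcard : (Finset.univ.filter fun i => cl m (n := n) k i = true).card
      = (Finset.univ.filter fun i => ¬ (cl m (n := n) k i = true)).card := by
    apply Finset.card_bij' (i := fun a _ => sig m hn a) (j := fun a _ => sig m hn a)
    · intro a ha
      simp only [Finset.mem_filter, Finset.mem_univ, true_and] at ha ⊢
      rw [sig_cl m hn k a, ha]
      simp
    · intro a ha
      simp only [Finset.mem_filter, Finset.mem_univ, true_and] at ha ⊢
      rw [sig_cl m hn k a]
      simp only [Bool.not_eq_true] at ha
      rw [ha]
      rfl
    · intro a _
      exact sig_sig m hn a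
    · intro a _
      exact sig_sig m hn a
  have hsum := Finset.card_filter_add_card_filter_not
    (s := (Finset.univ : Finset (Fin n))) (fun i => cl m (n := n) k i = true)
  unfold wt'
  rw [Finset.card_univ, Fintype.card_fin] at hsum
  omega

def NB (m : ℕ) {n : ℕ} (z : Fin n → Bool) : Prop := ∃ k, k < 2^m ∧ dle m k z

noncomputable def av (m : ℕ) {n : ℕ} (z : Fin n → Bool) : ℕ :=
  sInf {k | k < 2^m ∧ dle m k z}

lemma av_mem (m : ℕ) {n : ℕ} {z : Fin n → Bool} (h : NB m z) :
    av m z < 2^m ∧ dle m (av m z) z :=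
  Nat.sInf_mem (h : ∃ k, k ∈ {k | k < 2^m ∧ dle m k z})

lemma av_le (m : ℕ) {n : ℕ} {z : Fin n → Bool} {k : ℕ} (h1 : k < 2^m) (h2 : dle m k z) :
    av m z ≤ k := Nat.sInf_le ⟨h1, h2⟩

lemma cl_succ_eq (m : ℕ) {n : ℕ} (k : ℕ) (j : Fin n) (h1 : (j : ℕ) ≠ trl k)
    (h2 : (j : ℕ) ≠ trl k + m) : cl m (k+1) j = cl m k j := by
  unfold cl
  rw [gray_succ k]
  by_cases hj : (j : ℕ) < m
  · rw [if_pos hj, if_pos hj, Nat.testBit_xor, Nat.testBit_two_pow]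
    have hd : ¬ (trl k = (j : ℕ)) := by omega
    simp [hd]
  · rw [if_neg hj, if_neg hj, Nat.testBit_xor, Nat.testBit_two_pow]
    have hd : ¬ (trl k = (j : ℕ) - m) := by
      have : (j : ℕ) < n := j.isLt
      omega
    simp [hd]

lemma cl_succ_flip (m : ℕ) {n : ℕ} (k : ℕ) (j : Fin n) (hs : trl k < m)
    (h : (j : ℕ) = trl k ∨ (j : ℕ) = trl k + m) : cl m (k+1) j = !(cl m k j) := by
  unfold cl
  rw [gray_succ k]
  rcases h with h | h
  · have hj : (j : ℕ) < m := by omega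
    rw [if_pos hj, if_pos hj, Nat.testBit_xor, Nat.testBit_two_pow]
    have hd : trl k = (j : ℕ) := h.symm
    simp [hd]
  · have hj : ¬ (j : ℕ) < m := by omega
    rw [if_neg hj, if_neg hj, Nat.testBit_xor, Nat.testBit_two_pow]
    have hd : trl k = (j : ℕ) - m := by omega
    simp [hd]

lemma sig_val (m : ℕ) {n : ℕ} (hn : n = m + m) (i : Fin n) :
    ((sig m hn i : Fin n) : ℕ) = if (i : ℕ) < m then (i : ℕ) + m else (i : ℕ) - m := by
  unfold sig
  split <;> rfl

lemma NB_of_step (m n : ℕ) {z z' : Fin n → Bool} (h : Step (FF m) z z') (h' : NB m z') :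
    NB m z := by
  obtain ⟨i, hne, rfl⟩ := h
  cases hb : FF m z i with
  | true =>
    obtain ⟨k, h1, h2, _⟩ := of_decide_eq_true (hb : decide _ = true)
    exact ⟨k, h1, h2⟩
  | false =>
    obtain ⟨k, h1, h2⟩ := h'
    refine ⟨k, h1, fun j hj => ?_⟩
    have := h2 j hj
    by_cases hji : j = i
    · subst hji
      rw [Function.update_self, hb] at this
      exact Bool.noConfusion this
    · rwa [Function.update_of_ne hji] at this

lemma step_psi (m n : ℕ) (hn : n = m + m) {z z' : Fin n → Bool}
    (hz : NB m z) (hz' : NB m z') (hstep : Step (FF m) z z') :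
    2 * av m z' + wt' z' ≤ 2 * av m z + wt' z + 1 := by
  obtain ⟨i, hne, rfl⟩ := hstep
  cases hb : FF m z i with
  | true =>
    have hzi : z i = false := by
      cases hzi : z i
      · rfl
      · rw [hb, hzi] at hne; exact absurd rfl hne
    rw [hb] at hz'
    rw [wt_update_true z i hzi]
    have hsub : av m (Function.update z i true) ≤ av m z := by
      obtain ⟨h1, h2⟩ := av_mem m hz
      refine av_le m h1 fun j hj => ?_
      by_cases hji : j = i
      · subst hji; rw [Function.update_self]
      · rw [Function.update_of_ne hji]; exact h2 j hj
    omega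
  | false =>
    have hzi : z i = true := by
      cases hzi : z i
      · rw [hb, hzi] at hne; exact absurd rfl hne
      · rfl
    rw [hb] at hz'
    rw [wt_update_false z i hzi]
    have hkey : av m (Function.update z i false) ≤ av m z + 1 := by
      obtain ⟨haN, haD⟩ := av_mem m hz
      set a := av m z with ha
      have hforall : ∀ k, k < 2^m → dle m k z → cl m (min (k+1) (2^m - 1)) i = false := by
        intro k h1 h2
        cases hc : cl m (n := n) (min (k+1) (2^m - 1)) i with
        | false => rfl
        | true =>
          have hT : FF m z i = true := by
            unfold FF
            exact decide_eq_true ⟨k, h1, h2, hc⟩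
          rw [hb] at hT
          exact Bool.noConfusion hT
      have hfa := hforall a haN haD
      by_cases hcl : cl m (n := n) a i = true
      · -- flip case
        have haN' : a + 1 < 2^m := by
          by_contra hc
          have hmin : min (a+1) (2^m - 1) = a := by omega
          rw [hmin, hcl] at hfa
          exact Bool.noConfusion hfa
        have hmin : min (a+1) (2^m - 1) = a + 1 := by omega
        rw [hmin] at hfa
        have hs : trl a < m := trl_lt haN'
        have hiflip : (i : ℕ) = trl a ∨ (i : ℕ) = trl a + m := by
          by_contra hcon
          push_neg at hcon
          rw [cl_succ_eq m a i hcon.1 hcon.2, hcl] at hfa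
          exact Bool.noConfusion hfa
        obtain ⟨k', hk'N, hk'D⟩ := hz'
        have hk'i : cl m k' i = false := by
          cases hc2 : cl m (n := n) k' i with
          | false => rfl
          | true =>
            have := hk'D i hc2
            rw [Function.update_self] at this
            exact Bool.noConfusion this
        have hdle : dle m (a+1) (Function.update z i false) := by
          intro j hj
          by_cases hji : j = i
          · subst hji
            rw [hj] at hfa
            exact Bool.noConfusion hfa
          · rw [Function.update_of_ne hji]
            by_cases hjp : (j : ℕ) = trl a ∨ (j : ℕ) = trl a + m
            · -- j is the partner of i
              have hjsig : j = sig m hn i := by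
                apply Fin.ext
                rw [sig_val m hn i]
                have hvne : (j : ℕ) ≠ (i : ℕ) := fun hh => hji (Fin.ext hh)
                rcases hiflip with h1 | h1
                · rw [if_pos (by omega)]
                  omega
                · rw [if_neg (by omega)]
                  omega
              have hpair : cl m k' j = !(cl m (n := n) k' i) := by
                rw [hjsig, sig_cl m hn k' i]
              have hcj : cl m k' j = true := by rw [hpair, hk'i]; rfl
              have := hk'D j hcj
              rwa [Function.update_of_ne hji] at this
            · push_neg at hjp
              rw [cl_succ_eq m a j hjp.1 hjp.2] at hj
              exact haD j hj
        exact av_le m haN' hdle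
      · -- cl a i = false : a still below z'
        have hdle : dle m a (Function.update z i false) := by
          intro j hj
          by_cases hji : j = i
          · subst hji; exact absurd hj hcl
          · rw [Function.update_of_ne hji]; exact haD j hj
        have := av_le m haN hdle
        omega
    omega

lemma testBit_ge {m a t : ℕ} (ha : a < 2^m) (ht : m ≤ t) : (gray a).testBit t = false :=
  Nat.testBit_lt_two_pow (lt_of_lt_of_le (gray_lt ha) (Nat.pow_le_pow_right (by norm_num) ht))

lemma dle_mid (m n : ℕ) (hn : n = m + m) {k k' : ℕ} (hk1 : k + 1 < 2^m) (hk' : k' < 2^m)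
    (up : Fin n) (hup : (up : ℕ) = trl k ∨ (up : ℕ) = trl k + m)
    (h : dle m k' (Function.update (cl m (n := n) k) up true)) : k' = k ∨ k' = k + 1 := by
  have hs : trl k < m := trl_lt hk1
  have hkN : k < 2^m := by omega
  have hbits : ∀ t, t < m → t ≠ trl k → (gray k').testBit t = (gray k).testBit t := by
    intro t ht hts
    have hL := h ⟨t, by omega⟩
    have hR := h ⟨t + m, by omega⟩
    rw [Function.update_of_ne (Fin.ne_of_val_ne
      (show t ≠ (up : ℕ) by rcases hup with h1 | h1 <;> omega))] at hL
    rw [Function.update_of_ne (Fin.ne_of_val_ne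
      (show t + m ≠ (up : ℕ) by rcases hup with h1 | h1 <;> omega))] at hR
    simp only [cl] at hL hR
    rw [if_pos (show ((⟨t, by omega⟩ : Fin n)).val < m from ht),
        if_pos (show ((⟨t, by omega⟩ : Fin n)).val < m from ht)] at hL
    rw [if_neg (show ¬ ((⟨t + m, by omega⟩ : Fin n)).val < m by simp),
        if_neg (show ¬ ((⟨t + m, by omega⟩ : Fin n)).val < m by simp)] at hR
    simp only [show ((⟨t + m, by omega⟩ : Fin n)).val - m = t by simp] at hR
    cases hbt : (gray k').testBit t
    · rw [hbt] at hR
      cases hbt2 : (gray k).testBit t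
      · rfl
      · rw [hbt2] at hR
        simp at hR
    · rw [hbt] at hL
      exact (hL rfl).symm
  by_cases hbs : (gray k').testBit (trl k) = (gray k).testBit (trl k)
  · left
    apply gray_inj
    apply Nat.eq_of_testBit_eq
    intro t
    by_cases h1 : t < m
    · by_cases h2 : t = trl k
      · rw [h2]; exact hbs
      · exact hbits t h1 h2
    · rw [testBit_ge hk' (by omega), testBit_ge hkN (by omega)]
  · right
    apply gray_inj
    rw [gray_succ k]
    apply Nat.eq_of_testBit_eq
    intro t
    rw [Nat.testBit_xor, Nat.testBit_two_pow]
    by_cases h2 : t = trl k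
    · subst h2
      simp only [decide_true, Bool.xor_true]
      cases hbt : (gray k').testBit (trl k)
      · cases hbt2 : (gray k).testBit (trl k)
        · rw [hbt, hbt2] at hbs; exact absurd rfl hbs
        · rfl
      · cases hbt2 : (gray k).testBit (trl k)
        · rfl
        · rw [hbt, hbt2] at hbs; exact absurd rfl hbs
    · have hd : ¬ (trl k = t) := fun hh => h2 hh.symm
      simp only [hd, decide_false, Bool.xor_false]
      by_cases h1 : t < m
      · exact hbits t h1 h2
      · rw [testBit_ge hk' (by omega), testBit_ge hkN (by omega)]

lemma path_zero {I : Type*} [DecidableEq I] (f : (I → Bool) → I → Bool) (x : I → Bool) :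
    PathLen f x x 0 :=
  ⟨fun _ => x, rfl, rfl, fun k hk => absurd hk (Nat.not_lt_zero k)⟩

lemma path_snoc {I : Type*} [DecidableEq I] {f : (I → Bool) → I → Bool} {x y w : I → Bool}
    {l : ℕ} (hp : PathLen f x y l) (hs : Step f y w) : PathLen f x w (l+1) := by
  obtain ⟨p, h0, hl, hsteps⟩ := hp
  refine ⟨fun j => if j = l + 1 then w else p j, ?_, ?_, fun k hk => ?_⟩
  · show (if 0 = l + 1 then w else p 0) = x
    rw [if_neg (by omega), h0]
  · show (if l + 1 = l + 1 then w else p (l+1)) = w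
    rw [if_pos rfl]
  · show Step f (if k = l + 1 then w else p k) (if k + 1 = l + 1 then w else p (k + 1))
    by_cases hkl : k < l
    · rw [if_neg (by omega), if_neg (by omega)]
      exact hsteps k hkl
    · have hk2 : k = l := by omega
      subst hk2
      rw [if_neg (by omega), if_pos rfl, hl]
      exact hs

lemma two_steps_aux (m n : ℕ) (hn : n = m + m) {k : ℕ} (hk1 : k + 1 < 2^m) (up dn : Fin n)
    (hupv : (up : ℕ) = trl k ∨ (up : ℕ) = trl k + m)
    (hdnv : (dn : ℕ) = trl k ∨ (dn : ℕ) = trl k + m)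
    (hne : up ≠ dn)
    (hclup : cl m (n := n) k up = false)
    (hcldn : cl m (n := n) k dn = true) :
    Step (FF m) (cl m (n := n) k) (Function.update (cl m k) up true) ∧
      Step (FF m) (Function.update (cl m (n := n) k) up true) (cl m (k+1)) := by
  have hs : trl k < m := trl_lt hk1
  have hkN : k < 2^m := by omega
  have hmin : min (k+1) (2^m - 1) = k + 1 := by omega
  have hFF : FF m (cl m (n := n) k) = cl m (k+1) := by
    rw [FF_cl m n hn hkN, hmin]
  have hup1 : cl m (n := n) (k+1) up = true := by
    rw [cl_succ_flip m k up hs hupv, hclup]; rfl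
  have hdn1 : cl m (n := n) (k+1) dn = false := by
    rw [cl_succ_flip m k dn hs hdnv, hcldn]; rfl
  have hFFup : FF m (cl m (n := n) k) up = true := by rw [hFF]; exact hup1
  have hvne : (up : ℕ) ≠ (dn : ℕ) := Fin.val_ne_of_ne hne
  constructor
  · refine ⟨up, ?_, ?_⟩
    · rw [hFFup, hclup]; simp
    · rw [hFFup]
  · -- second step
    set mid := Function.update (cl m (n := n) k) up true with hmid
    have hmiddn : mid dn = true := by
      rw [hmid, Function.update_of_ne (Ne.symm hne)]
      exact hcldn
    have hFFmid : FF m mid dn = false := by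
      apply decide_eq_false
      rintro ⟨k', hk'N, hk'd, hk'c⟩
      rcases dle_mid m n hn hk1 hk'N up hupv hk'd with rfl | rfl
      · rw [hmin, hdn1] at hk'c
        exact Bool.noConfusion hk'c
      · by_cases hke : k + 1 + 1 ≤ 2^m - 1
        · have hmin2 : min (k+1+1) (2^m - 1) = k+1+1 := by omega
          rw [hmin2] at hk'c
          have hs2 : trl (k+1) < m := trl_lt (by omega)
          have htne : trl (k+1) ≠ trl k := trl_succ_ne k
          have hd1 : (dn : ℕ) ≠ trl (k+1) := by omega
          have hd2 : (dn : ℕ) ≠ trl (k+1) + m := by omega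
          rw [cl_succ_eq m (k+1) dn hd1 hd2, hdn1] at hk'c
          exact Bool.noConfusion hk'c
        · have hmin2 : min (k+1+1) (2^m - 1) = k+1 := by omega
          rw [hmin2, hdn1] at hk'c
          exact Bool.noConfusion hk'c
    refine ⟨dn, ?_, ?_⟩
    · rw [hFFmid, hmiddn]; simp
    · rw [hFFmid]
      symm
      funext j
      by_cases hjd : j = dn
      · subst hjd
        rw [Function.update_self, hdn1]
      · rw [Function.update_of_ne hjd]
        by_cases hju : j = up
        · subst hju
          rw [hmid, Function.update_self, hup1]
        · rw [hmid, Function.update_of_ne hju]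
          have hjv1 : (j : ℕ) ≠ trl k := by
            have g1 := Fin.val_ne_of_ne hjd
            have g2 := Fin.val_ne_of_ne hju
            omega
          have hjv2 : (j : ℕ) ≠ trl k + m := by
            have g1 := Fin.val_ne_of_ne hjd
            have g2 := Fin.val_ne_of_ne hju
            omega
          rw [cl_succ_eq m k j hjv1 hjv2]

lemma climb (m n : ℕ) (hn : n = m + m) :
    ∀ k, k < 2^m → ∃ l, PathLen (FF m) (cl m (n := n) 0) (cl m k) l := by
  intro k
  induction k with
  | zero => exact fun _ => ⟨0, path_zero _ _⟩
  | succ k ih =>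
    intro hk1
    obtain ⟨l, hp⟩ := ih (by omega)
    have hs : trl k < m := trl_lt hk1
    have hlt1 : trl k < n := by omega
    have hlt2 : trl k + m < n := by omega
    cases hbit : (gray k).testBit (trl k) with
    | false =>
      have h1 : cl m (n := n) k ⟨trl k, hlt1⟩ = false := by
        simp only [cl]
        rw [if_pos (show ((⟨trl k, hlt1⟩ : Fin n)).val < m from hs)]
        exact hbit
      have h2 : cl m (n := n) k ⟨trl k + m, hlt2⟩ = true := by
        simp only [cl]
        rw [if_neg (by simp)]
        simp only [show ((⟨trl k + m, hlt2⟩ : Fin n)).val - m = trl k by simp]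
        rw [hbit]
        rfl
      obtain ⟨s1, s2⟩ := two_steps_aux m n hn hk1 ⟨trl k, hlt1⟩ ⟨trl k + m, hlt2⟩
        (Or.inl rfl) (Or.inr rfl) (Fin.ne_of_val_ne (by simp; omega)) h1 h2
      exact ⟨l + 1 + 1, path_snoc (path_snoc hp s1) s2⟩
    | true =>
      have h1 : cl m (n := n) k ⟨trl k + m, hlt2⟩ = false := by
        simp only [cl]
        rw [if_neg (by simp)]
        simp only [show ((⟨trl k + m, hlt2⟩ : Fin n)).val - m = trl k by simp]
        rw [hbit]
        rfl
      have h2 : cl m (n := n) k ⟨trl k, hlt1⟩ = true := by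
        simp only [cl]
        rw [if_pos (show ((⟨trl k, hlt1⟩ : Fin n)).val < m from hs)]
        exact hbit
      obtain ⟨s1, s2⟩ := two_steps_aux m n hn hk1 ⟨trl k + m, hlt2⟩ ⟨trl k, hlt1⟩
        (Or.inr rfl) (Or.inl rfl) (Fin.ne_of_val_ne (by simp; omega)) h1 h2
      exact ⟨l + 1 + 1, path_snoc (path_snoc hp s1) s2⟩

theorem stmt_5 (n : ℕ) (hn : Even n) (hn2 : 2 ≤ n) :
    ∃ f : (Fin n → Bool) → Fin n → Bool, Monotone f ∧
      ∃ x y, f y = y ∧ (∃ l, PathLen f x y l) ∧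
        ∀ l, PathLen f x y l → 2 ^ (n / 2) ≤ l := by
  obtain ⟨m, hm⟩ := hn
  have hm1 : 1 ≤ m := by omega
  have h2m : 1 ≤ 2^m := Nat.one_le_two_pow
  have h2m2 : 2 ≤ 2^m := by
    calc 2 = 2^1 := by norm_num
    _ ≤ 2^m := Nat.pow_le_pow_right (by norm_num) hm1
  refine ⟨FF m, FF_mono m, cl m 0, cl m (2^m - 1), ?_, ?_, ?_⟩
  · have hminy : min (2^m - 1 + 1) (2^m - 1) = 2^m - 1 := min_eq_right (by omega)
    rw [FF_cl m n hm (k := 2^m - 1) (by omega), hminy]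
  · exact climb m n hm (2^m - 1) (by omega)
  · intro l hp
    obtain ⟨p, h0, hl, hsteps⟩ := hp
    have hNend : NB m (p l) := by
      rw [hl]
      exact ⟨2^m - 1, by omega, dle_refl m _⟩
    have hNB : ∀ d j, j + d = l → NB m (p j) := by
      intro d
      induction d with
      | zero =>
        intro j hj
        rw [(show j = l by omega)]
        exact hNend
      | succ d ihd =>
        intro j hj
        exact NB_of_step m n (hsteps j (by omega)) (ihd (j+1) (by omega))
    have hNBj : ∀ j, j ≤ l → NB m (p j) := fun j hj => hNB (l - j) j (by omega)
    have hpsi : ∀ j, j ≤ l → 2 * av m (p j) + wt' (p j) ≤ 2 * av m (p 0) + wt' (p 0) + j := by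
      intro j
      induction j with
      | zero => intro _; omega
      | succ j ihj =>
        intro hj
        have hh1 := ihj (by omega)
        have hh2 := step_psi m n hm (hNBj j (by omega)) (hNBj (j+1) hj) (hsteps j (by omega))
        omega
    have hend := hpsi l le_rfl
    rw [h0, hl] at hend
    have hax : av m (cl m (n := n) 0) = 0 :=
      Nat.le_zero.mp (av_le m (by omega) (dle_refl m 0))
    have hay : av m (cl m (n := n) (2^m - 1)) = 2^m - 1 := by
      have hNBy : NB m (cl m (n := n) (2^m - 1)) := ⟨2^m - 1, by omega, dle_refl m _⟩
      obtain ⟨hA, hB⟩ := av_mem m hNBy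
      exact cl_le_inj m n hm hA (by omega) hB
    rw [hax, hay, wt_cl m n hm 0, wt_cl m n hm _] at hend
    have hn2m : n / 2 = m := by omega
    rw [hn2m]
    omega
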